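/- arXiv:2504.14755 — 2 statements merged into one kernel-verified Lean document; each statement's English description precedes it below -/
import Mathlib

section
/- Let b : [0,∞) → ℝ be continuously differentiable with b(0) > 0, and suppose B(t) = -ln(b(t)/(1+b(t))) satisfies the differential inequality dB/dt ≤ γ/B(t) for some γ > 0 along the trajectory whenever b(t) > 0. Then b(t) > 0 for all t ≥ 0. -/
/-- Core CBF invariance argument: if `b` is C¹ with `b 0 > 0` and
`B(t) = -ln(b(t)/(1+b(t)))` satisfies `dB/dt ≤ γ/B(t)` (γ > 0) whenever `b(t) > 0`,
then `b(t) > 0` for all `t ≥ 0`. -/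
theorem stmt10 (b : ℝ → ℝ) (γ : ℝ) (hγ : 0 < γ)
    (hb : ContDiff ℝ 1 b) (hb0 : 0 < b 0)
    (hB : ∀ t : ℝ, 0 ≤ t → 0 < b t →
      deriv (fun s => -Real.log (b s / (1 + b s))) t ≤
        γ / (-Real.log (b t / (1 + b t)))) :
    ∀ t : ℝ, 0 ≤ t → 0 < b t := by
  by_contra h
  push_neg at h
  obtain ⟨t₀, ht₀, hbt₀⟩ := h
  have hbc : Continuous b := hb.continuous
  have hbd : Differentiable ℝ b := hb.differentiable one_ne_zero
  set S : Set ℝ := {t | 0 ≤ t ∧ b t ≤ 0} with hS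
  have hSne : S.Nonempty := ⟨t₀, ht₀, hbt₀⟩
  have hSbdd : BddBelow S := ⟨0, fun x hx => hx.1⟩
  have hSclosed : IsClosed S := by
    have : S = Set.Ici 0 ∩ b ⁻¹' Set.Iic 0 := by
      ext x; simp [hS, Set.mem_setOf_eq]
    rw [this]
    exact isClosed_Ici.inter (isClosed_Iic.preimage hbc)
  set T := sInf S with hT
  have hTS : T ∈ S := hSclosed.csInf_mem hSne hSbdd
  have hT0 : 0 ≤ T := hTS.1
  have hbT : b T ≤ 0 := hTS.2
  have hTpos : 0 < T := by
    rcases hT0.lt_or_eq with h | h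
    · exact h
    · exfalso; rw [← h] at hbT; linarith
  -- b s > 0 on [0, T)
  have hpos : ∀ s, 0 ≤ s → s < T → 0 < b s := by
    intro s hs0 hsT
    by_contra h'
    push_neg at h'
    exact absurd (csInf_le hSbdd ⟨hs0, h'⟩) (not_le.mpr hsT)
  -- b T = 0
  have hbT0 : b T = 0 := by
    refine le_antisymm hbT ?_
    have htend : Filter.Tendsto b (nhdsWithin T (Set.Iio T)) (nhds (b T)) :=
      (hbc.tendsto T).mono_left nhdsWithin_le_nhds
    refine ge_of_tendsto htend ?_
    filter_upwards [Ioo_mem_nhdsLT_of_mem (Set.mem_Ioc.mpr ⟨hTpos, le_rfl⟩)] with s hs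
    exact (hpos s hs.1.le hs.2).le
  set B : ℝ → ℝ := fun s => -Real.log (b s / (1 + b s)) with hBdef
  -- basic facts at points with b s > 0
  have hratio : ∀ s, 0 < b s → 0 < b s / (1 + b s) ∧ b s / (1 + b s) < 1 := by
    intro s hs
    have h1 : (0:ℝ) < 1 + b s := by linarith
    constructor
    · exact div_pos hs h1
    · rw [div_lt_one h1]; linarith
  have hBpos : ∀ s, 0 < b s → 0 < B s := by
    intro s hs
    obtain ⟨h1, h2⟩ := hratio s hs
    have := Real.log_neg h1 h2
    simp [hBdef]; linarith
  have hBdiff : ∀ s, 0 < b s → HasDerivAt B (deriv B s) s := by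
    intro s hs
    have h1 : (0:ℝ) < 1 + b s := by linarith
    have hr := (hratio s hs).1
    have hd1 : HasDerivAt b (deriv b s) s := (hbd s).hasDerivAt
    have hd2 : HasDerivAt (fun x => 1 + b x) (deriv b s) s := by
      have := (hasDerivAt_const s (1:ℝ)).add hd1; rwa [zero_add] at this
    have hd3 := hd1.div hd2 (ne_of_gt h1)
    have hd4 := (hd3.log (ne_of_gt hr)).neg
    exact hd4.differentiableAt.hasDerivAt
  -- the key bound: for t ∈ [0, T), B t ^ 2 ≤ B 0 ^ 2 + 2 * γ * t
  have key : ∀ t, 0 ≤ t → t < T → B t ^ 2 ≤ B 0 ^ 2 + 2 * γ * t := by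
    intro t ht0 htT
    set g : ℝ → ℝ := fun s => B s ^ 2 - 2 * γ * s with hg
    have hgd : ∀ x ∈ Set.Ioo 0 t, HasDerivAt g (2 * B x * deriv B x - 2 * γ) x := by
      intro x hx
      have hbx : 0 < b x := hpos x hx.1.le (hx.2.trans htT)
      have hBx := hBdiff x hbx
      have h1 : HasDerivAt (fun s => B s ^ 2) (2 * B x ^ 1 * deriv B x) x := hBx.pow 2
      have h2 : HasDerivAt (fun s : ℝ => 2 * γ * s) (2 * γ) x := by
        simpa using (hasDerivAt_id x).const_mul (2 * γ)
      have := h1.sub h2; rwa [pow_one] at this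
    have hmono : AntitoneOn g (Set.Icc 0 t) := by
      refine antitoneOn_of_deriv_nonpos (convex_Icc 0 t) ?_ ?_ ?_
      · intro x hx
        have hbx : 0 < b x := hpos x hx.1 (lt_of_le_of_lt hx.2 htT)
        exact (((hBdiff x hbx).pow 2).sub
          (by simpa using (hasDerivAt_id x).const_mul (2 * γ))).differentiableAt.continuousAt.continuousWithinAt
      · intro x hx
        rw [interior_Icc] at hx
        exact ((hgd x hx).differentiableAt).differentiableWithinAt
      · intro x hx
        rw [interior_Icc] at hx
        have hbx : 0 < b x := hpos x hx.1.le (hx.2.trans htT)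
        rw [(hgd x hx).deriv]
        have hBx : 0 < B x := hBpos x hbx
        have hd := hB x hx.1.le hbx
        have hd' : deriv B x ≤ γ / B x := hd
        have : 2 * B x * deriv B x ≤ 2 * γ := by
          have h1 : B x * deriv B x ≤ γ := by
            have := mul_le_mul_of_nonneg_left hd' hBx.le
            rwa [mul_div_cancel₀ _ (ne_of_gt hBx)] at this
          nlinarith
        linarith
    have := hmono (Set.left_mem_Icc.mpr ht0) (Set.mem_Icc.mpr ⟨ht0, le_rfl⟩) ht0
    simp [hg] at this
    linarith
  -- so ratio bounded below on [0, T)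
  set M := B 0 ^ 2 + 2 * γ * T with hM
  have hMnn : 0 ≤ M := by
    have : 0 ≤ B 0 ^ 2 := sq_nonneg _
    nlinarith
  have hlow : ∀ s, 0 ≤ s → s < T → Real.exp (-Real.sqrt M) ≤ b s / (1 + b s) := by
    intro s hs0 hsT
    have hbs := hpos s hs0 hsT
    have hBs := hBpos s hbs
    have h1 : B s ^ 2 ≤ M := by
      have := key s hs0 hsT
      have h2 : 2 * γ * s ≤ 2 * γ * T := by nlinarith
      simp [hM]; linarith
    have h2 : B s ≤ Real.sqrt M := by
      nlinarith [Real.sq_sqrt hMnn, Real.sqrt_nonneg M, sq_nonneg (B s - Real.sqrt M)]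
    have h3 : -Real.sqrt M ≤ Real.log (b s / (1 + b s)) := by
      have : B s = -Real.log (b s / (1 + b s)) := rfl
      linarith [h2, this ▸ h2]
    calc Real.exp (-Real.sqrt M) ≤ Real.exp (Real.log (b s / (1 + b s))) :=
          Real.exp_le_exp.mpr h3
      _ = b s / (1 + b s) := Real.exp_log (hratio s hbs).1
  -- take limit s → T⁻: contradiction
  have hfT : b T / (1 + b T) = 0 := by rw [hbT0]; simp
  have hcont : Filter.Tendsto (fun s => b s / (1 + b s)) (nhdsWithin T (Set.Iio T))
      (nhds (b T / (1 + b T))) := by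
    have : ContinuousAt (fun s => b s / (1 + b s)) T := by
      apply ContinuousAt.div (hbc.continuousAt) ((continuous_const.add hbc).continuousAt)
      show (1:ℝ) + b T ≠ 0; rw [hbT0]; norm_num
    exact this.tendsto.mono_left nhdsWithin_le_nhds
  have hfinal : Real.exp (-Real.sqrt M) ≤ b T / (1 + b T) := by
    refine ge_of_tendsto hcont ?_
    filter_upwards [Ioo_mem_nhdsLT_of_mem (Set.mem_Ioc.mpr ⟨hTpos, le_rfl⟩)] with s hs
    exact hlow s hs.1.le hs.2
  rw [hfT] at hfinal
  exact absurd hfinal (not_le.mpr (Real.exp_pos _))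
end

section
/- Consider the control-affine system ẋ = f(x) + g(x)u with f, g locally Lipschitz, and suppose for a C¹ function B : ℝⁿ → (0,∞) and constant γ > 0 the feedback u(x) satisfies L_f B(x) + L_g B(x)·u(x) ≤ γ/B(x) for all x. Then along any solution x(t) on [0,T], B(x(t)) ≤ √(B(x(0))² + 2γt). -/
/-- Quantitative CBF bound: for the control-affine system `ẋ = f(x) + g(x) u(x)` with
`f, g` locally Lipschitz, a C¹ positive function `B` and `γ > 0` with
`L_f B(x) + L_g B(x)·u(x) ≤ γ/B(x)` for all `x`, along any solution on `[0,T]` we have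
`B(x(t)) ≤ √(B(x(0))² + 2γt)`. -/
theorem stmt19 (n p : ℕ) (T γ : ℝ) (hγ : 0 < γ) (hT : 0 ≤ T)
    (f : (Fin n → ℝ) → Fin n → ℝ)
    (g : (Fin n → ℝ) → ((Fin p → ℝ) →L[ℝ] (Fin n → ℝ)))
    (u : (Fin n → ℝ) → Fin p → ℝ)
    (hf : LocallyLipschitz f) (hg : LocallyLipschitz g)
    (B : (Fin n → ℝ) → ℝ)
    (hB : ContDiff ℝ 1 B) (hBpos : ∀ y, 0 < B y)
    (hCBF : ∀ y : Fin n → ℝ,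
      fderiv ℝ B y (f y) + fderiv ℝ B y (g y (u y)) ≤ γ / B y)
    (x : ℝ → Fin n → ℝ)
    (hx : ∀ t ∈ Set.Icc (0 : ℝ) T,
      HasDerivAt x (f (x t) + g (x t) (u (x t))) t) :
    ∀ t ∈ Set.Icc (0 : ℝ) T,
      B (x t) ≤ Real.sqrt ((B (x 0)) ^ 2 + 2 * γ * t) := by
  set φ : ℝ → ℝ := fun t => (B (x t)) ^ 2 - 2 * γ * t with hφdef
  have hBd : Differentiable ℝ B := hB.differentiable one_ne_zero
  have hder : ∀ t ∈ Set.Icc (0 : ℝ) T,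
      HasDerivAt φ (2 * B (x t) *
        (fderiv ℝ B (x t) (f (x t) + g (x t) (u (x t)))) - 2 * γ) t := by
    intro t ht
    have h1 : HasDerivAt (fun s => B (x s))
        (fderiv ℝ B (x t) (f (x t) + g (x t) (u (x t)))) t :=
      (hBd (x t)).hasFDerivAt.comp_hasDerivAt t (hx t ht)
    have h2 := (h1.fun_pow 2).fun_sub ((hasDerivAt_id t).const_mul (2 * γ))
    simpa [φ, mul_comm, mul_assoc, mul_left_comm] using h2
  have hnonpos : ∀ t ∈ Set.Icc (0 : ℝ) T,
      2 * B (x t) * (fderiv ℝ B (x t) (f (x t) + g (x t) (u (x t)))) - 2 * γ ≤ 0 := by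
    intro t ht
    have hBt := hBpos (x t)
    have hle : fderiv ℝ B (x t) (f (x t) + g (x t) (u (x t))) ≤ γ / B (x t) := by
      have := hCBF (x t)
      rw [map_add]; exact this
    have : 2 * B (x t) * (fderiv ℝ B (x t) (f (x t) + g (x t) (u (x t))))
        ≤ 2 * B (x t) * (γ / B (x t)) := by
      apply mul_le_mul_of_nonneg_left hle
      positivity
    have h2 : 2 * B (x t) * (γ / B (x t)) = 2 * γ := by
      field_simp
    linarith [h2 ▸ this]
  have hanti : AntitoneOn φ (Set.Icc 0 T) := by
    apply antitoneOn_of_deriv_nonpos (convex_Icc 0 T)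
    · exact fun t ht => ((hder t ht).continuousAt).continuousWithinAt
    · intro t ht
      exact ((hder t (interior_subset ht)).differentiableAt).differentiableWithinAt
    · intro t ht
      rw [(hder t (interior_subset ht)).deriv]
      exact hnonpos t (interior_subset ht)
  intro t ht
  have h0 : (0 : ℝ) ∈ Set.Icc (0 : ℝ) T := ⟨le_rfl, hT⟩
  have := hanti h0 ht ht.1
  have hsq : (B (x t)) ^ 2 ≤ (B (x 0)) ^ 2 + 2 * γ * t := by
    simp only [φ] at this
    linarith
  have hBt := (hBpos (x t)).le
  exact (Real.le_sqrt hBt (le_trans (sq_nonneg _) hsq)).mpr hsq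
end
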